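/- Fix an open interval (a,b) with a < b. Let p₁ = 2, p₂ = 3, …, p_m be all primes ≤ 3/(b-a) (i.e. all primes below the least prime exceeding max(3/(b-a), 2)), and for each i ≤ m let s_i be the least natural number with p_i^{s_i} > 4/(b-a). Then for every natural number r that is NOT of the form p₁^{t₁}···p_m^{t_m} with 0 ≤ t_i ≤ s_i − 1 for all i, there exists an integer q with gcd(q, r) = 1 and a < q/r < b. -/

import Mathlib

/-- Theorem on denominators of irreducible fractions in an interval `(a,b)`:
any positive natural number `r` not of the form `p₁^{t₁}···p_m^{t_m}` — where
`p₁,…,p_m` are the primes `≤ max(3/(b-a), 2)` and `0 ≤ tᵢ ≤ sᵢ - 1` with `sᵢ`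
minimal such that `pᵢ^{sᵢ} > 4/(b-a)` — is the denominator of an irreducible
fraction `q/r ∈ (a,b)`. Membership of `r` in the excluded set is expressed via
the prime factorization of `r`. -/
theorem irreducible_fraction_all_large_denominators (a b : ℝ) (hab : a < b)
    (s : ℕ → ℕ) (hs : ∀ p : ℕ, s p = sInf {n : ℕ | 4 / (b - a) < (p : ℝ) ^ n})
    (r : ℕ) (hr : 0 < r)
    (hform : ¬ ∀ p ∈ r.primeFactors,
        (p : ℝ) ≤ max (3 / (b - a)) 2 ∧ r.factorization p ≤ s p - 1) :
    ∃ q : ℤ, Int.gcd q (r : ℤ) = 1 ∧ a < (q : ℝ) / (r : ℝ) ∧ (q : ℝ) / (r : ℝ) < b := by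
  have hba : (0:ℝ) < b - a := sub_pos.mpr hab
  push_neg at hform
  obtain ⟨p, hpmem, hcond⟩ := hform
  have hp : p.Prime := Nat.prime_of_mem_primeFactors hpmem
  have hpr : p ∣ r := Nat.dvd_of_mem_primeFactors hpmem
  set v := r.factorization p with hv
  have hv1 : 1 ≤ v := hp.factorization_pos_of_dvd hr.ne' hpr
  set P := p ^ v with hP
  set m := r / P with hm
  have hrPm : r = P * m := (Nat.ordProj_mul_ordCompl_eq_self r p).symm
  have hpm : ¬ p ∣ m := Nat.not_dvd_ordCompl hp hr.ne'
  have hm0 : 0 < m := by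
    rcases Nat.eq_zero_or_pos m with h | h
    · rw [h, Nat.mul_zero] at hrPm; omega
    · exact h
  -- Key inequality : 2 < P * (b - a)
  have hP2 : (2:ℝ) < (P:ℝ) * (b - a) := by
    by_cases hsmall : (p : ℝ) ≤ max (3 / (b - a)) 2
    · have hv2 : s p ≤ v := by have := hcond hsmall; omega
      have hne : {n : ℕ | 4 / (b - a) < (p : ℝ) ^ n}.Nonempty := by
        obtain ⟨n, hn⟩ := pow_unbounded_of_one_lt (4 / (b - a))
          (show (1:ℝ) < (p:ℝ) by exact_mod_cast hp.one_lt)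
        exact ⟨n, hn⟩
      have hmem := Nat.sInf_mem hne
      rw [← hs p] at hmem
      have h4 : 4 / (b - a) < (p:ℝ) ^ v :=
        lt_of_lt_of_le hmem
          (pow_le_pow_right₀ (by exact_mod_cast hp.one_le) hv2)
      have h4' : 4 / (b - a) < (P:ℝ) := by rw [hP]; push_cast; exact h4
      have := (div_lt_iff₀ hba).mp h4'
      linarith
    · push_neg at hsmall
      have h3 : 3 / (b - a) < (p:ℝ) := (le_max_left _ _).trans_lt hsmall
      have h3' : 3 < (p:ℝ) * (b - a) := (div_lt_iff₀ hba).mp h3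
      have hpP : (p:ℝ) ≤ (P:ℝ) := by
        exact_mod_cast Nat.le_self_pow (by omega) p
      nlinarith
  -- Construction: two consecutive elements of the progression 1 + j*m in (ra, rb)
  have hmR : (0:ℝ) < (m:ℝ) := by exact_mod_cast hm0
  set x : ℝ := ((r:ℝ) * a - 1) / (m:ℝ) with hx
  set j0 : ℤ := ⌊x⌋ + 1 with hj0
  have hxm : x * (m:ℝ) = (r:ℝ) * a - 1 := div_mul_cancel₀ _ hmR.ne'
  have hrR : (r:ℝ) = (P:ℝ) * (m:ℝ) := by exact_mod_cast congrArg (Nat.cast (R := ℝ)) hrPm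
  have hxj : x < (j0:ℝ) := by
    rw [hj0]; push_cast; linarith [Int.lt_floor_add_one x]
  have hjx : (j0:ℝ) ≤ x + 1 := by
    rw [hj0]; push_cast; linarith [Int.floor_le x]
  have hlow : (r:ℝ) * a < 1 + (j0:ℝ) * m := by nlinarith
  have hhigh : 1 + ((j0:ℝ) + 1) * m < (r:ℝ) * b := by
    have : (r:ℝ) * b - (r:ℝ) * a = (P:ℝ) * (b - a) * m := by rw [hrR]; ring
    nlinarith
  -- at most one of the two candidates is divisible by p
  have hnotboth : ¬ ((p:ℤ) ∣ (1 + j0 * (m:ℤ)) ∧ (p:ℤ) ∣ (1 + (j0 + 1) * (m:ℤ))) := by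
    rintro ⟨h1, h2⟩
    have : (p:ℤ) ∣ (m:ℤ) := by
      have h3 := dvd_sub h2 h1
      have : (1 + (j0 + 1) * (m:ℤ)) - (1 + j0 * (m:ℤ)) = (m:ℤ) := by ring
      rwa [this] at h3
    exact hpm (by exact_mod_cast Int.natCast_dvd_natCast.mp (by simpa using this))
  have key : ∀ j : ℤ, ¬ (p:ℤ) ∣ (1 + j * (m:ℤ)) →
      Int.gcd (1 + j * (m:ℤ)) (r:ℤ) = 1 := by
    intro j hj
    rw [← Int.isCoprime_iff_gcd_eq_one]
    have hcp : IsCoprime ((p:ℤ)) (1 + j * (m:ℤ)) :=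
      (Nat.prime_iff_prime_int.mp hp).coprime_iff_not_dvd.mpr hj
    have hcm : IsCoprime (1 + j * (m:ℤ)) ((m:ℤ)) :=
      (isCoprime_one_left (x := (m:ℤ))).add_mul_right_left j
    have : IsCoprime (1 + j * (m:ℤ)) (((p:ℤ)) ^ v * (m:ℤ)) :=
      (hcp.symm.pow_right).mul_right hcm
    have hrz : (r:ℤ) = ((p:ℤ)) ^ v * (m:ℤ) := by exact_mod_cast congrArg (Nat.cast (R := ℤ)) hrPm
    rwa [hrz]
  have hrR0 : (0:ℝ) < (r:ℝ) := by exact_mod_cast hr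
  have final : ∀ q : ℤ, Int.gcd q (r:ℤ) = 1 → (r:ℝ) * a < (q:ℝ) → (q:ℝ) < (r:ℝ) * b →
      ∃ q : ℤ, Int.gcd q (r : ℤ) = 1 ∧ a < (q : ℝ) / (r : ℝ) ∧ (q : ℝ) / (r : ℝ) < b := by
    intro q hg h1 h2
    refine ⟨q, hg, ?_, ?_⟩
    · rw [lt_div_iff₀ hrR0]; linarith
    · rw [div_lt_iff₀ hrR0]; linarith
  by_cases hd : (p:ℤ) ∣ (1 + j0 * (m:ℤ))
  · have hd2 : ¬ (p:ℤ) ∣ (1 + (j0 + 1) * (m:ℤ)) := fun h => hnotboth ⟨hd, h⟩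
    refine final _ (key _ hd2) ?_ ?_
    · push_cast; nlinarith
    · push_cast; push_cast at hhigh; linarith
  · refine final _ (key _ hd) ?_ ?_
    · push_cast; linarith
    · push_cast; push_cast at hhigh; nlinarith
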